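/- Let P be a hereditary graph class, let G be a finite graph, and let U be a set of vertices of G such that no forbidden set of G contains any vertex of U. Then a set S ⊆ V(G) is a maximal P set of G if and only if U ⊆ S and S \ U is a maximal P set of the graph G − U. -/
import Mathlib


attribute [local instance] Classical.propDecidable

/-- A *graph class*: a collection of finite simple graphs, given as a property of
simple graphs over every finite vertex type. -/
abbrev GraphClass : Type 1 :=
  ∀ (V : Type) [Fintype V], SimpleGraph V → Prop

/-- The graph class is a nonempty collection of graphs. -/
def GraphClass.NonemptyClass (P : GraphClass) : Prop :=
  ∃ (V : Type) (_ : Fintype V) (G : SimpleGraph V), P V G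

/-- The graph class is closed under isomorphism. -/
def GraphClass.IsoClosed (P : GraphClass) : Prop :=
  ∀ (V W : Type) (_ : Fintype V) (_ : Fintype W) (G : SimpleGraph V) (H : SimpleGraph W),
    _root_.Nonempty (G ≃g H) → (P V G ↔ P W H)

/-- The graph class is hereditary: it is closed under taking induced subgraphs. -/
def GraphClass.Hereditary (P : GraphClass) : Prop :=
  ∀ (V : Type) (_ : Fintype V) (G : SimpleGraph V) (S : Set V),
    P V G → P (↥S) (G.induce S)

variable {V : Type} [Fintype V]

/-- `S ⊆ V(G)` is a `P` set of `G` if the induced subgraph `G[S]` belongs to `P`. -/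
def IsPSet (P : GraphClass) (G : SimpleGraph V) (S : Set V) : Prop :=
  P (↥S) (G.induce S)

/-- `S` is a maximal `P` set of `G`: a `P` set with no proper superset that is a `P` set. -/
def IsMaxPSet (P : GraphClass) (G : SimpleGraph V) (S : Set V) : Prop :=
  IsPSet P G S ∧ ∀ T : Set V, S ⊂ T → ¬ IsPSet P G T

/-- `S` is a connected `P` set of `G`: a `P` set inducing a connected subgraph. -/
def IsConnPSet (P : GraphClass) (G : SimpleGraph V) (S : Set V) : Prop :=
  IsPSet P G S ∧ (G.induce S).Connected

/-- `S` is a maximal connected `P` set of `G`: a connected `P` set contained in no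
strictly larger connected `P` set. -/
def IsMaxConnPSet (P : GraphClass) (G : SimpleGraph V) (S : Set V) : Prop :=
  IsConnPSet P G S ∧ ∀ T : Set V, S ⊂ T → ¬ IsConnPSet P G T

/-- A forbidden set of `G` (with respect to the class `P`): an inclusion-minimal vertex
set inducing a subgraph that is not in `P`. -/
def IsForbiddenSet (P : GraphClass) (G : SimpleGraph V) (X : Set V) : Prop :=
  ¬ IsPSet P G X ∧ ∀ Y : Set V, Y ⊂ X → IsPSet P G Y

/-- The induced subgraph of an induced subgraph is an induced subgraph. -/
def induceInduceIso (G : SimpleGraph V) (T X : Set V) (h : X ⊆ T) :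
    (G.induce T).induce (Subtype.val ⁻¹' X) ≃g G.induce X where
  toEquiv :=
    { toFun := fun a => ⟨a.1.1, a.2⟩
      invFun := fun a => ⟨⟨a.1, h a.2⟩, a.2⟩
      left_inv := fun a => rfl
      right_inv := fun a => rfl }
  map_rel_iff' := Iff.rfl

lemma isPSet_subset (P : GraphClass) (hiso : P.IsoClosed) (hher : P.Hereditary)
    (G : SimpleGraph V) {T X : Set V} (hX : X ⊆ T) (hT : IsPSet P G T) : IsPSet P G X := by
  have h1 := hher ↥T _ (G.induce T) (Subtype.val ⁻¹' X) hT
  exact (hiso _ _ _ _ _ _ ⟨induceInduceIso G T X hX⟩).mp h1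

lemma isPSet_induce_iff (P : GraphClass) (hiso : P.IsoClosed) (G : SimpleGraph V)
    (U : Set V) {T : Set V} (hT : T ⊆ Uᶜ) :
    IsPSet P G T ↔ IsPSet P (G.induce Uᶜ) (Subtype.val ⁻¹' T) :=
  (hiso _ _ _ _ _ _ ⟨induceInduceIso G Uᶜ T hT⟩).symm

lemma isPSet_union (P : GraphClass) (hiso : P.IsoClosed) (hher : P.Hereditary)
    (G : SimpleGraph V) (U : Set V)
    (hU : ∀ X : Set V, IsForbiddenSet P G X → ∀ u ∈ U, u ∉ X)
    {T : Set V} (hT : IsPSet P G T) : IsPSet P G (T ∪ U) := by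
  suffices h : ∀ n (X : Set V), X.ncard = n → X ⊆ T ∪ U → IsPSet P G X from
    h _ _ rfl subset_rfl
  intro n
  induction n using Nat.strong_induction_on with
  | _ n ih =>
    intro X hcard hsub
    by_contra hX
    have hforb : IsForbiddenSet P G X := by
      refine ⟨hX, fun Y hY => ?_⟩
      exact ih Y.ncard (hcard ▸ Set.ncard_lt_ncard hY X.toFinite) Y rfl (hY.subset.trans hsub)
    have hXT : X ⊆ T := fun x hx => (hsub hx).resolve_right fun hu => hU X hforb x hu hx
    exact hX (isPSet_subset P hiso hher G hXT hT)

/-- Let `P` be a hereditary graph class, `G` a finite graph, and `U` a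
set of vertices of `G` no vertex of which is contained in any forbidden set of `G`.
Then `S ⊆ V(G)` is a maximal `P` set of `G` if and only if `U ⊆ S` and `S \ U` is a
maximal `P` set of `G − U`. -/
theorem maxPSet_iff_of_unforbidden_vertices
    (P : GraphClass) (hne : P.NonemptyClass) (hiso : P.IsoClosed) (hher : P.Hereditary)
    {V : Type} [Fintype V] (G : SimpleGraph V) (U : Set V)
    (hU : ∀ X : Set V, IsForbiddenSet P G X → ∀ u ∈ U, u ∉ X) (S : Set V) :
    IsMaxPSet P G S ↔
      U ⊆ S ∧ IsMaxPSet P (G.induce (Uᶜ)) (Subtype.val ⁻¹' (S \ U)) := by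
  have hSU : (S \ U : Set V) ⊆ Uᶜ := fun x hx => hx.2
  constructor
  · rintro ⟨hS, hmax⟩
    have hUS : U ⊆ S := by
      by_contra h
      have hss : S ⊂ S ∪ U := by
        refine (Set.ssubset_iff_of_subset Set.subset_union_left).mpr ?_
        obtain ⟨u, hu, hus⟩ := Set.not_subset.mp h
        exact ⟨u, Or.inr hu, hus⟩
      exact hmax _ hss (isPSet_union P hiso hher G U hU hS)
    refine ⟨hUS, (isPSet_induce_iff P hiso G U hSU).mp
      (isPSet_subset P hiso hher G Set.diff_subset hS), ?_⟩
    intro T' hT' hPT'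
    have hT'U : Subtype.val '' T' ⊆ Uᶜ := by
      rintro x ⟨a, _, rfl⟩; exact a.2
    have h1 : IsPSet P G (Subtype.val '' T') := by
      rw [isPSet_induce_iff P hiso G U hT'U,
        Set.preimage_image_eq T' Subtype.val_injective]
      exact hPT'
    have h2 : IsPSet P G (Subtype.val '' T' ∪ U) :=
      isPSet_union P hiso hher G U hU h1
    have hsub : S ⊆ Subtype.val '' T' ∪ U := by
      intro x hx
      by_cases hxU : x ∈ U
      · exact Or.inr hxU
      · exact Or.inl ⟨⟨x, hxU⟩, hT'.subset ⟨hx, hxU⟩, rfl⟩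
    have hss : S ⊂ Subtype.val '' T' ∪ U := by
      refine (Set.ssubset_iff_of_subset hsub).mpr ?_
      obtain ⟨a, haT, haS⟩ := Set.exists_of_ssubset hT'
      refine ⟨a.1, Or.inl ⟨a, haT, rfl⟩, fun haSmem => ?_⟩
      exact haS ⟨haSmem, a.2⟩
    exact hmax _ hss h2
  · rintro ⟨hUS, hP', hmax'⟩
    have hSdiff : IsPSet P G (S \ U) := (isPSet_induce_iff P hiso G U hSU).mpr hP'
    have hS : IsPSet P G S := by
      have := isPSet_union P hiso hher G U hU hSdiff
      rwa [Set.diff_union_self, Set.union_eq_self_of_subset_right hUS] at this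
    refine ⟨hS, fun T hST hPT => ?_⟩
    have hTdiff : IsPSet P G (T \ U) := isPSet_subset P hiso hher G Set.diff_subset hPT
    have hTU : (T \ U : Set V) ⊆ Uᶜ := fun x hx => hx.2
    have hPT' : IsPSet P (G.induce Uᶜ) (Subtype.val ⁻¹' (T \ U)) :=
      (isPSet_induce_iff P hiso G U hTU).mp hTdiff
    refine hmax' (Subtype.val ⁻¹' (T \ U)) ?_ hPT'
    have hsub2 : Subtype.val ⁻¹' (S \ U) ⊆ (Subtype.val ⁻¹' (T \ U) : Set ↥(Uᶜ)) :=
      fun a ha => ⟨hST.subset ha.1, ha.2⟩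
    refine (Set.ssubset_iff_of_subset hsub2).mpr ?_
    obtain ⟨x, hxT, hxS⟩ := Set.exists_of_ssubset hST
    have hxU : x ∉ U := fun h => hxS (hUS h)
    exact ⟨⟨x, hxU⟩, ⟨hxT, hxU⟩, fun hmem => hxS hmem.1⟩
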